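/- Let f, f' : 𝔽₂ⁿ → 𝔽₂ and h : 𝔽₂ᵏ → 𝔽₂ be Boolean functions. If there exist bijections π, σ : 𝔽₂ⁿ → 𝔽₂ⁿ with f(π(x) ⊕ σ(y)) = f'(x ⊕ y) for all x, y ∈ 𝔽₂ⁿ, then there exist bijections Π, Σ : 𝔽₂ⁿ × 𝔽₂ᵏ → 𝔽₂ⁿ × 𝔽₂ᵏ such that (f ⊕ h)(Π(x,w) ⊕ Σ(y,z)) = (f' ⊕ h)((x,w) ⊕ (y,z)) for all (x,w), (y,z) ∈ 𝔽₂ⁿ × 𝔽₂ᵏ, where the direct sum f ⊕ h : 𝔽₂ⁿ × 𝔽₂ᵏ → 𝔽₂ is defined by (f ⊕ h)(x,w) := f(x) ⊕ h(w). In other words, if the translation designs dev(D_f) and dev(D_{f'}) are isomorphic, then so are dev(D_{f⊕h}) and dev(D_{f'⊕h}). -/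
import Mathlib

open Function

/-- The vector space `𝔽₂ⁿ`. -/
abbrev BV (n : ℕ) := Fin n → ZMod 2

/-- If the translation designs `dev(D_f)` and `dev(D_{f'})` are isomorphic (i.e. there are
bijections `π, σ` of `𝔽₂ⁿ` with `f(π(x) ⊕ σ(y)) = f'(x ⊕ y)`), then for any Boolean
function `h` on `𝔽₂ᵏ`, the translation designs `dev(D_{f⊕h})` and `dev(D_{f'⊕h})` of the
direct sums `(f ⊕ h)(x,w) = f(x) ⊕ h(w)` are isomorphic. -/
theorem support_designs_of_direct_sums_isomorphic
    {n k : ℕ} (f f' : BV n → ZMod 2) (h : BV k → ZMod 2)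
    (hiso : ∃ π σ : BV n → BV n, Bijective π ∧ Bijective σ ∧
      ∀ x y : BV n, f (π x + σ y) = f' (x + y)) :
    ∃ P S : BV n × BV k → BV n × BV k, Bijective P ∧ Bijective S ∧
      ∀ p q : BV n × BV k,
        f ((P p + S q).1) + h ((P p + S q).2) = f' ((p + q).1) + h ((p + q).2) := by
  obtain ⟨π, σ, hπ, hσ, hfs⟩ := hiso
  refine ⟨Prod.map π id, Prod.map σ id, hπ.prodMap bijective_id,
    hσ.prodMap bijective_id, fun p q => ?_⟩
  simp [Prod.map, hfs]
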